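/- For finite disjoint unions: let ω₁, ω₂ be finite sets, ω ⊆ ω₁ ∪ ω₂ with |ω ∩ (ω₁ ∩ ω₂)| = k. Then Σ over pairs (ω₁', ω₂') with ω₁' ⊆ ω₁, ω₂' ⊆ ω₂, ω₁' ∪ ω₂' = ω of (−2)^{|ω₁'| + |ω₂'|} equals (−2)^{|ω|} if k = 0 and equals 0 if k > 0. -/

import Mathlib

open Finset

private lemma insert_eq_insert_iff {α : Type*} [DecidableEq α] {a : α} {X s : Finset α}
    (hX : a ∉ X) (hs : a ∉ s) : insert a X = insert a s ↔ X = s := by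
  constructor
  · intro h
    have := congrArg (fun t => Finset.erase t a) h
    simpa [Finset.erase_insert hX, Finset.erase_insert hs] using this
  · intro h; rw [h]

private lemma aux_T {α : Type*} [DecidableEq α] (s : Finset α) :
    ∑ A ∈ s.powerset, ∑ B ∈ s.powerset,
      (if A ∪ B = s then (-2 : ℤ) ^ (A.card + B.card) else 0) =
      if s = ∅ then 1 else 0 := by
  induction s using Finset.induction_on with
  | empty => simp
  | @insert a s ha _ =>
    have expand : ∀ F : Finset α → Finset α → ℤ,
        ∑ A ∈ (insert a s).powerset, ∑ B ∈ (insert a s).powerset, F A B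
          = ∑ A ∈ s.powerset, ∑ B ∈ s.powerset,
              (F A B + F A (insert a B) + F (insert a A) B
                + F (insert a A) (insert a B)) := by
      intro F
      simp only [Finset.sum_powerset_insert ha, Finset.sum_add_distrib]
      ring
    rw [expand]
    rw [if_neg (Finset.insert_ne_empty a s)]
    apply Finset.sum_eq_zero
    intro A hA
    apply Finset.sum_eq_zero
    intro B hB
    rw [Finset.mem_powerset] at hA hB
    have haA : a ∉ A := fun h => ha (hA h)
    have haB : a ∉ B := fun h => ha (hB h)
    have haAB : a ∉ A ∪ B := by simp [haA, haB]
    have h1 : (A ∪ B = insert a s) = False := by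
      simp only [eq_iff_iff, iff_false]
      intro h
      exact haAB (h ▸ Finset.mem_insert_self a s)
    have h2 : (A ∪ insert a B = insert a s) = (A ∪ B = s) := by
      rw [Finset.union_insert, eq_iff_iff, insert_eq_insert_iff haAB ha]
    have h3 : (insert a A ∪ B = insert a s) = (A ∪ B = s) := by
      rw [Finset.insert_union, eq_iff_iff, insert_eq_insert_iff haAB ha]
    have h4 : (insert a A ∪ insert a B = insert a s) = (A ∪ B = s) := by
      rw [Finset.insert_union, Finset.union_insert, Finset.insert_idem,
        eq_iff_iff, insert_eq_insert_iff haAB ha]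
    simp only [h1, h2, h3, h4, Finset.card_insert_of_notMem haA,
      Finset.card_insert_of_notMem haB, if_false]
    by_cases h : A ∪ B = s
    · simp only [h, if_true]; ring
    · simp only [h, if_false]; ring

/-- for finite sets `ω ⊆ ω₁ ∪ ω₂` with `k = |ω ∩ (ω₁ ∩ ω₂)|`, the sum
over pairs `(ω₁', ω₂')` with `ω₁' ⊆ ω₁`, `ω₂' ⊆ ω₂`, `ω₁' ∪ ω₂' = ω` of
`(−2)^{|ω₁'|+|ω₂'|}` equals `(−2)^{|ω|}` if `k = 0` and `0` if `k > 0`. -/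
theorem sum_pairs_union_neg_two {α : Type*} [DecidableEq α]
    (ω₁ ω₂ ω : Finset α) (hω : ω ⊆ ω₁ ∪ ω₂) (k : ℕ)
    (hk : (ω ∩ (ω₁ ∩ ω₂)).card = k) :
    ∑ p ∈ (ω₁.powerset ×ˢ ω₂.powerset).filter (fun p => p.1 ∪ p.2 = ω),
        (-2 : ℤ) ^ (p.1.card + p.2.card) =
      if k = 0 then (-2) ^ ω.card else 0 := by
  classical
  subst hk
  set S : Finset α := ω ∩ (ω₁ ∩ ω₂) with hS
  set D₁ : Finset α := ω \ ω₂ with hD1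
  set D₂ : Finset α := ω \ ω₁ with hD2
  have hSω : S ⊆ ω := Finset.inter_subset_left
  have hSω₁ : S ⊆ ω₁ := fun x hx => (Finset.mem_inter.1 (Finset.mem_inter.1 hx).2).1
  have hSω₂ : S ⊆ ω₂ := fun x hx => (Finset.mem_inter.1 (Finset.mem_inter.1 hx).2).2
  have hD₁ω₁ : D₁ ⊆ ω₁ := by
    intro x hx
    rw [Finset.mem_sdiff] at hx
    rcases Finset.mem_union.1 (hω hx.1) with h | h
    · exact h
    · exact absurd h hx.2
  have hD₂ω₂ : D₂ ⊆ ω₂ := by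
    intro x hx
    rw [Finset.mem_sdiff] at hx
    rcases Finset.mem_union.1 (hω hx.1) with h | h
    · exact absurd h hx.2
    · exact h
  have hdisj1 : Disjoint D₁ S := by
    rw [Finset.disjoint_left]
    intro x hx hxS
    exact (Finset.mem_sdiff.1 hx).2 (hSω₂ hxS)
  have hdisj2 : Disjoint D₂ S := by
    rw [Finset.disjoint_left]
    intro x hx hxS
    exact (Finset.mem_sdiff.1 hx).2 (hSω₁ hxS)
  have hcover : D₁ ∪ D₂ ∪ S = ω := by
    ext x
    simp only [Finset.mem_union, Finset.mem_sdiff, Finset.mem_inter, hS, hD1, hD2]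
    constructor
    · rintro ((⟨h, _⟩ | ⟨h, _⟩) | ⟨h, _⟩) <;> exact h
    · intro hx
      by_cases h1 : x ∈ ω₁ <;> by_cases h2 : x ∈ ω₂
      · exact Or.inr ⟨hx, h1, h2⟩
      · exact Or.inl (Or.inl ⟨hx, h2⟩)
      · exact Or.inl (Or.inr ⟨hx, h1⟩)
      · exact absurd (hω hx) (by simp [h1, h2])
  -- the key claim: p.1 = D₁ ∪ (p.1 ∩ S), p.2 = D₂ ∪ (p.2 ∩ S) for p in the filter
  have hrec1 : ∀ p : Finset α × Finset α, p.1 ⊆ ω₁ → p.2 ⊆ ω₂ → p.1 ∪ p.2 = ω →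
      D₁ ∪ p.1 ∩ S = p.1 := by
    intro p h1 h2 h3
    ext x
    simp only [Finset.mem_union, Finset.mem_inter, Finset.mem_sdiff, hD1, hS]
    constructor
    · rintro (⟨hxω, hx2⟩ | ⟨hx, _⟩)
      · rcases Finset.mem_union.1 (h3 ▸ hxω : x ∈ p.1 ∪ p.2) with h | h
        · exact h
        · exact absurd (h2 h) hx2
      · exact hx
    · intro hx
      have hxω : x ∈ ω := h3 ▸ Finset.mem_union_left _ hx
      by_cases hx2 : x ∈ ω₂
      · exact Or.inr ⟨hx, hxω, h1 hx, hx2⟩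
      · exact Or.inl ⟨hxω, hx2⟩
  have hrec2 : ∀ p : Finset α × Finset α, p.1 ⊆ ω₁ → p.2 ⊆ ω₂ → p.1 ∪ p.2 = ω →
      D₂ ∪ p.2 ∩ S = p.2 := by
    intro p h1 h2 h3
    ext x
    simp only [Finset.mem_union, Finset.mem_inter, Finset.mem_sdiff, hD2, hS]
    constructor
    · rintro (⟨hxω, hx1⟩ | ⟨hx, _⟩)
      · rcases Finset.mem_union.1 (h3 ▸ hxω : x ∈ p.1 ∪ p.2) with h | h
        · exact absurd (h1 h) hx1
        · exact h
      · exact hx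
    · intro hx
      have hxω : x ∈ ω := h3 ▸ Finset.mem_union_right _ hx
      by_cases hx1 : x ∈ ω₁
      · exact Or.inr ⟨hx, hxω, hx1, h2 hx⟩
      · exact Or.inl ⟨hxω, hx1⟩
  have key : ∑ p ∈ (ω₁.powerset ×ˢ ω₂.powerset).filter (fun p => p.1 ∪ p.2 = ω),
        (-2 : ℤ) ^ (p.1.card + p.2.card)
      = ∑ q ∈ (S.powerset ×ˢ S.powerset).filter (fun q => q.1 ∪ q.2 = S),
          (-2 : ℤ) ^ (q.1.card + q.2.card) * (-2) ^ (D₁.card + D₂.card) := by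
    refine Finset.sum_nbij' (fun p => (p.1 ∩ S, p.2 ∩ S))
      (fun q => (D₁ ∪ q.1, D₂ ∪ q.2)) ?_ ?_ ?_ ?_ ?_
    · intro p hp
      simp only [Finset.mem_filter, Finset.mem_product, Finset.mem_powerset] at hp ⊢
      refine ⟨⟨Finset.inter_subset_right, Finset.inter_subset_right⟩, ?_⟩
      rw [← Finset.union_inter_distrib_right, hp.2, Finset.inter_eq_right.2 hSω]
    · intro q hq
      simp only [Finset.mem_filter, Finset.mem_product, Finset.mem_powerset] at hq ⊢
      obtain ⟨⟨hq1, hq2⟩, hq3⟩ := hq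
      refine ⟨⟨Finset.union_subset hD₁ω₁ (hq1.trans hSω₁),
        Finset.union_subset hD₂ω₂ (hq2.trans hSω₂)⟩, ?_⟩
      have : D₁ ∪ q.1 ∪ (D₂ ∪ q.2) = D₁ ∪ D₂ ∪ (q.1 ∪ q.2) := by
        ext x; simp only [Finset.mem_union]; tauto
      rw [this, hq3, hcover]
    · intro p hp
      simp only [Finset.mem_filter, Finset.mem_product, Finset.mem_powerset] at hp
      obtain ⟨⟨h1, h2⟩, h3⟩ := hp
      exact Prod.ext (hrec1 p h1 h2 h3) (hrec2 p h1 h2 h3)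
    · intro q hq
      simp only [Finset.mem_filter, Finset.mem_product, Finset.mem_powerset] at hq
      obtain ⟨⟨hq1, hq2⟩, _⟩ := hq
      have e1 : (D₁ ∪ q.1) ∩ S = q.1 := by
        rw [Finset.union_inter_distrib_right, Finset.inter_eq_left.2 hq1,
          Finset.disjoint_iff_inter_eq_empty.1 hdisj1, Finset.empty_union]
      have e2 : (D₂ ∪ q.2) ∩ S = q.2 := by
        rw [Finset.union_inter_distrib_right, Finset.inter_eq_left.2 hq2,
          Finset.disjoint_iff_inter_eq_empty.1 hdisj2, Finset.empty_union]
      exact Prod.ext e1 e2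
    · intro p hp
      simp only [Finset.mem_filter, Finset.mem_product, Finset.mem_powerset] at hp
      obtain ⟨⟨h1, h2⟩, h3⟩ := hp
      have c1 : p.1.card = D₁.card + (p.1 ∩ S).card := by
        conv_lhs => rw [← hrec1 p h1 h2 h3]
        exact Finset.card_union_of_disjoint (hdisj1.mono_right Finset.inter_subset_right)
      have c2 : p.2.card = D₂.card + (p.2 ∩ S).card := by
        conv_lhs => rw [← hrec2 p h1 h2 h3]
        exact Finset.card_union_of_disjoint (hdisj2.mono_right Finset.inter_subset_right)
      show (-2 : ℤ) ^ (p.1.card + p.2.card)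
          = (-2) ^ ((p.1 ∩ S).card + (p.2 ∩ S).card) * (-2) ^ (D₁.card + D₂.card)
      rw [c1, c2, ← pow_add]
      congr 1
      ring
  rw [key, ← Finset.sum_mul]
  have hfilter : ∑ q ∈ (S.powerset ×ˢ S.powerset).filter (fun q => q.1 ∪ q.2 = S),
        (-2 : ℤ) ^ (q.1.card + q.2.card)
      = ∑ A ∈ S.powerset, ∑ B ∈ S.powerset,
          (if A ∪ B = S then (-2 : ℤ) ^ (A.card + B.card) else 0) := by
    rw [Finset.sum_filter, Finset.sum_product]
  rw [hfilter, aux_T]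
  by_cases hk0 : S.card = 0
  · have hSe : S = ∅ := Finset.card_eq_zero.1 hk0
    rw [if_pos hSe, if_pos hk0, one_mul]
    have hdisj : Disjoint D₁ D₂ := by
      rw [Finset.disjoint_left]
      intro x hx1 hx2
      have h1 := (Finset.mem_sdiff.1 hx1)
      have h2 := (Finset.mem_sdiff.1 hx2)
      rcases Finset.mem_union.1 (hω h1.1) with h | h
      · exact h2.2 h
      · exact h1.2 h
    have hcard : D₁.card + D₂.card = ω.card := by
      rw [← Finset.card_union_of_disjoint hdisj]
      congr 1
      rw [← hcover, hSe, Finset.union_empty]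
    rw [hcard]
  · rw [if_neg (fun h => hk0 (by rw [h]; simp)), if_neg hk0, zero_mul]
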